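/- Let H be a complex separable Hilbert space and T a bounded linear operator on H. There exists a sequence of vectors (v_i)_{i∈ℕ} in H such that the family {Tⁿ v_i : i ∈ ℕ, n ≥ 0} is a Parseval frame of H if and only if ‖T‖ ≤ 1 and for every v ∈ H the iterates (T*)ⁿ v converge to 0 as n → ∞. -/

import Mathlib

open scoped ComplexInnerProductSpace

set_option synthInstance.maxHeartbeats 1000000
set_option maxHeartbeats 2000000

section Aux

variable {H : Type*} [NormedAddCommGroup H] [InnerProductSpace ℂ H] [CompleteSpace H]

private lemma aux_inner_pow (T : H →L[ℂ] H) (n : ℕ) (x y : H) :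
    ⟪x, (T ^ n) y⟫ = ⟪((ContinuousLinearMap.adjoint T) ^ n) x, y⟫ := by
  have h : (ContinuousLinearMap.adjoint T) ^ n = ContinuousLinearMap.adjoint (T ^ n) := by
    rw [← ContinuousLinearMap.star_eq_adjoint, ← ContinuousLinearMap.star_eq_adjoint, star_pow]
  rw [h, ContinuousLinearMap.adjoint_inner_left]

private lemma aux_selfadj_inner (S : H →L[ℂ] H) (hS : IsSelfAdjoint S) (x y : H) :
    ⟪x, S y⟫ = ⟪S x, y⟫ := by
  have h : ContinuousLinearMap.adjoint S = S := by
    rw [← ContinuousLinearMap.star_eq_adjoint]; exact hS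
  conv_rhs => rw [← h]
  rw [ContinuousLinearMap.adjoint_inner_left]

private lemma aux_exists_frame [TopologicalSpace.SeparableSpace H] :
    ∃ e : ℕ → H, ∀ y : H, HasSum (fun n : ℕ => ‖⟪y, e n⟫‖ ^ 2) (‖y‖ ^ 2) := by
  obtain ⟨w, b, hb⟩ := exists_hilbertBasis ℂ H
  have horth : Orthonormal ℂ ((↑) : w → H) := by rw [← hb]; exact b.orthonormal
  haveI hcount : Countable w := by
    apply Pairwise.countable_of_isOpen_disjoint
      (s := fun i : w => Metric.ball (i : H) (1/2))
    · intro i j hij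
      apply Metric.ball_disjoint_ball
      have h0 : ⟪(i : H), (j : H)⟫ = 0 := horth.2 hij
      have h1 : ‖(i : H)‖ = 1 := horth.1 i
      have h2 : ‖(j : H)‖ = 1 := horth.1 j
      have h3 : ‖(i : H) - (j : H)‖ ^ 2 = 2 := by
        rw [@norm_sub_sq ℂ _ _ _ _ (i : H) (j : H), h0, h1, h2]
        norm_num
      have h4 : dist (i : H) (j : H) = ‖(i : H) - (j : H)‖ := dist_eq_norm _ _
      nlinarith [norm_nonneg ((i : H) - (j : H))]
    · intro i; exact Metric.isOpen_ball
    · intro i; exact ⟨i, Metric.mem_ball_self (by norm_num)⟩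
  letI : Encodable w := Encodable.ofCountable w
  classical
  refine ⟨fun n => ((Encodable.decode₂ w n).map (fun i => b i)).getD 0, fun y => ?_⟩
  have key : HasSum (fun i : w => ‖⟪y, b i⟫‖ ^ 2) (‖y‖ ^ 2) := by
    have h2 := b.hasSum_inner_mul_inner y y
    have h3 : (fun i : w => ⟪y, b i⟫ * ⟪b i, y⟫)
        = fun i : w => ((‖⟪y, b i⟫‖ ^ 2 : ℝ) : ℂ) := by
      funext i
      rw [← inner_conj_symm (b i) y, Complex.mul_conj]
      norm_cast
      simp [Complex.normSq_eq_norm_sq]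
    rw [h3, inner_self_eq_norm_sq_to_K] at h2
    norm_cast at h2
    exact (RCLike.hasSum_ofReal ℂ).mp h2
  have hinj : Function.Injective (Encodable.encode : w → ℕ) := Encodable.encode_injective
  refine (Function.Injective.hasSum_iff hinj ?_).mp ?_
  · intro n hn
    have hdec : Encodable.decode₂ w n = none := by
      by_contra hne
      exact hn (Encodable.decode₂_ne_none_iff.mp hne)
    simp [hdec]
  · convert key using 1
    funext i
    simp [Encodable.decode₂_encode]

end Aux

/-- An operator `T` on a complex separable Hilbert space admits a
Parseval frame of iterations `{Tⁿ vᵢ}` iff `‖T‖ ≤ 1` and `(T*)ⁿ v → 0` for all `v`. -/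
theorem parseval_frame_of_iterations_iff
    (H : Type*) [NormedAddCommGroup H] [InnerProductSpace ℂ H]
    [CompleteSpace H] [TopologicalSpace.SeparableSpace H]
    (T : H →L[ℂ] H) :
    (∃ v : ℕ → H, ∀ x : H,
        ∑' p : ℕ × ℕ, ‖⟪x, (T ^ p.2) (v p.1)⟫‖ ^ 2 = ‖x‖ ^ 2) ↔
      (‖T‖ ≤ 1 ∧ ∀ v : H,
        Filter.Tendsto (fun n : ℕ => ((ContinuousLinearMap.adjoint T) ^ n) v)
          Filter.atTop (nhds 0)) := by
  set A := ContinuousLinearMap.adjoint T with hA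
  have hnormA : ‖A‖ = ‖T‖ := ContinuousLinearMap.adjoint.norm_map T
  constructor
  · rintro ⟨v, hv⟩
    set f : H → ℕ × ℕ → ℝ := fun x p => ‖⟪x, (T ^ p.2) (v p.1)⟫‖ ^ 2 with hf
    have hnn : ∀ (x : H) (p : ℕ × ℕ), 0 ≤ f x p := fun x p => by positivity
    have hsumm : ∀ x : H, Summable (f x) := by
      intro x
      by_contra hs
      have h0 := hv x
      rw [tsum_eq_zero_of_not_summable hs] at h0
      have hx : x = 0 := by
        have : ‖x‖ = 0 := by nlinarith [norm_nonneg x]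
        exact norm_eq_zero.mp this
      subst hx
      apply hs
      have : f 0 = fun _ => 0 := by funext p; simp [hf]
      rw [this]
      exact summable_zero
    have hshift : ∀ (x : H) (N : ℕ) (p : ℕ × ℕ),
        f ((A ^ N) x) p = f x (p.1, p.2 + N) := by
      intro x N p
      have h1 : ⟪(A ^ N) x, (T ^ p.2) (v p.1)⟫ = ⟪x, (T ^ (p.2 + N)) (v p.1)⟫ := by
        rw [← aux_inner_pow T N x ((T ^ p.2) (v p.1))]
        congr 1
        rw [add_comm, pow_add, ContinuousLinearMap.mul_apply]
      simp only [hf, h1]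
    have hkey : ∀ (x : H) (N : ℕ),
        ‖(A ^ N) x‖ ^ 2 = ∑' p : ℕ × ℕ, f x (p.1, p.2 + N) := by
      intro x N
      rw [← hv ((A ^ N) x)]
      exact tsum_congr fun p => hshift x N p
    constructor
    · rw [← hnormA]
      refine ContinuousLinearMap.opNorm_le_bound A zero_le_one fun x => ?_
      rw [one_mul]
      have hinj : Function.Injective (fun p : ℕ × ℕ => (p.1, p.2 + 1)) := by
        intro a b h
        simpa [Prod.ext_iff] using h
      have h1 : ‖A x‖ ^ 2 ≤ ‖x‖ ^ 2 := by
        have h2 : ‖(A ^ 1) x‖ ^ 2 = ∑' p : ℕ × ℕ, f x (p.1, p.2 + 1) := hkey x 1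
        rw [pow_one] at h2
        rw [h2, ← hv x]
        exact Summable.tsum_le_tsum_of_inj (fun p : ℕ × ℕ => (p.1, p.2 + 1)) hinj
          (fun c _ => hnn x c) (fun p => le_rfl)
          ((hsumm x).comp_injective hinj) (hsumm x)
      calc ‖A x‖ = Real.sqrt (‖A x‖ ^ 2) := (Real.sqrt_sq (norm_nonneg _)).symm
        _ ≤ Real.sqrt (‖x‖ ^ 2) := Real.sqrt_le_sqrt h1
        _ = ‖x‖ := Real.sqrt_sq (norm_nonneg _)
    · intro x
      set g : ℕ → ℝ := fun n => ∑' i : ℕ, f x (i, n) with hg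
      have hsq : Filter.Tendsto (fun N : ℕ => ‖(A ^ N) x‖ ^ 2) Filter.atTop (nhds 0) := by
        have hEq : ∀ N : ℕ, ‖(A ^ N) x‖ ^ 2 = ∑' k : ℕ, g (k + N) := by
          intro N
          rw [hkey x N]
          have hinj2 : Function.Injective (fun p : ℕ × ℕ => (p.1, p.2 + N)) := by
            intro a b h
            simpa [Prod.ext_iff] using h
          have hs1 : Summable (fun p : ℕ × ℕ => f x (p.1, p.2 + N)) :=
            (hsumm x).comp_injective hinj2
          have hswap : (∑' p : ℕ × ℕ, f x (p.1, p.2 + N))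
              = ∑' p : ℕ × ℕ, f x (p.2, p.1 + N) := by
            rw [← (Equiv.prodComm ℕ ℕ).tsum_eq (fun p : ℕ × ℕ => f x (p.1, p.2 + N))]
            rfl
          have hinj3 : Function.Injective (fun p : ℕ × ℕ => ((p.2 : ℕ), p.1 + N)) := by
            intro a b h
            simp only [Prod.ext_iff] at h ⊢
            omega
          have hs2 : Summable (fun p : ℕ × ℕ => f x (p.2, p.1 + N)) :=
            (hsumm x).comp_injective hinj3
          rw [hswap, Summable.tsum_prod' hs2 (fun n => (hs2.prod_factor n))]
        rw [funext hEq]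
        exact tendsto_sum_nat_add g
      have hnrm : Filter.Tendsto (fun N : ℕ => ‖(A ^ N) x‖) Filter.atTop (nhds 0) := by
        have h := hsq.sqrt
        rw [Real.sqrt_zero] at h
        refine h.congr fun N => Real.sqrt_sq (norm_nonneg _)
      exact tendsto_zero_iff_norm_tendsto_zero.mpr hnrm
  · rintro ⟨hT, hst⟩
    obtain ⟨e, he⟩ := aux_exists_frame (H := H)
    set D : H →L[ℂ] H := 1 - T * A with hD
    have hAle : ∀ y : H, ‖A y‖ ≤ ‖y‖ := by
      intro y
      calc ‖A y‖ ≤ ‖A‖ * ‖y‖ := A.le_opNorm y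
        _ ≤ 1 * ‖y‖ := by
            apply mul_le_mul_of_nonneg_right _ (norm_nonneg y)
            rw [hnormA]; exact hT
        _ = ‖y‖ := one_mul _
    have hDinner : ∀ y : H, ⟪y, D y⟫ = ⟪y, y⟫ - ⟪A y, A y⟫ := by
      intro y
      simp only [hD, ContinuousLinearMap.sub_apply, ContinuousLinearMap.one_apply,
        ContinuousLinearMap.mul_apply, inner_sub_right]
      congr 1
      rw [hA, ContinuousLinearMap.adjoint_inner_left]
    have hDpos : 0 ≤ D := by
      rw [ContinuousLinearMap.nonneg_iff_isPositive]
      constructor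
      · have : star D = D := by
          simp only [hD, star_sub, star_one, star_mul, ContinuousLinearMap.star_eq_adjoint,
            hA, ContinuousLinearMap.adjoint_adjoint]
        exact ContinuousLinearMap.isSelfAdjoint_iff_isSymmetric.mp this
      · intro y
        have h1 : D.reApplyInnerSelf y = ‖y‖ ^ 2 - ‖A y‖ ^ 2 := by
          rw [ContinuousLinearMap.reApplyInnerSelf_apply, inner_re_symm, hDinner y, map_sub,
            inner_self_eq_norm_sq, inner_self_eq_norm_sq]
        rw [h1, sub_nonneg]
        exact pow_le_pow_left₀ (norm_nonneg _) (hAle y) 2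
    set S : H →L[ℂ] H := CFC.sqrt D with hS
    have hSsa : IsSelfAdjoint S := IsSelfAdjoint.of_nonneg (CFC.sqrt_nonneg D)
    have hSS : S * S = D := CFC.sqrt_mul_sqrt_self D hDpos
    have hSnorm : ∀ y : H, ‖S y‖ ^ 2 = ‖y‖ ^ 2 - ‖A y‖ ^ 2 := by
      intro y
      have h1 : ⟪S y, S y⟫ = ⟪y, D y⟫ := by
        rw [← aux_selfadj_inner S hSsa y (S y), ← ContinuousLinearMap.mul_apply, hSS]
      have h2 : RCLike.re ⟪S y, S y⟫ = RCLike.re (⟪y, y⟫ - ⟪A y, A y⟫) := by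
        rw [h1, hDinner]
      rw [map_sub, inner_self_eq_norm_sq, inner_self_eq_norm_sq, inner_self_eq_norm_sq] at h2
      exact h2
    have hAiter : ∀ (n : ℕ) (x : H), (A ^ (n + 1)) x = A ((A ^ n) x) := by
      intro n x
      rw [pow_succ', ContinuousLinearMap.mul_apply]
    have htel : ∀ x : H, HasSum (fun n : ℕ => ‖S ((A ^ n) x)‖ ^ 2) (‖x‖ ^ 2) := by
      intro x
      rw [hasSum_iff_tendsto_nat_of_nonneg (fun n => by positivity)]
      have hEq : ∀ N : ℕ, (∑ n ∈ Finset.range N, ‖S ((A ^ n) x)‖ ^ 2)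
          = ‖x‖ ^ 2 - ‖(A ^ N) x‖ ^ 2 := by
        intro N
        have h1 : ∀ n : ℕ, ‖S ((A ^ n) x)‖ ^ 2
            = ‖(A ^ n) x‖ ^ 2 - ‖(A ^ (n + 1)) x‖ ^ 2 := by
          intro n
          rw [hSnorm, hAiter]
        calc (∑ n ∈ Finset.range N, ‖S ((A ^ n) x)‖ ^ 2)
            = ∑ n ∈ Finset.range N, (‖(A ^ n) x‖ ^ 2 - ‖(A ^ (n + 1)) x‖ ^ 2) :=
              Finset.sum_congr rfl fun n _ => h1 n
          _ = ‖(A ^ 0) x‖ ^ 2 - ‖(A ^ N) x‖ ^ 2 :=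
              Finset.sum_range_sub' (fun n => ‖(A ^ n) x‖ ^ 2) N
          _ = ‖x‖ ^ 2 - ‖(A ^ N) x‖ ^ 2 := by rw [pow_zero, ContinuousLinearMap.one_apply]
      rw [funext hEq]
      have h2 : Filter.Tendsto (fun N : ℕ => ‖(A ^ N) x‖ ^ 2) Filter.atTop (nhds 0) := by
        have h3 := ((hst x).norm).pow 2
        simpa using h3
      simpa using tendsto_const_nhds.sub h2
    refine ⟨fun i => S (e i), fun x => ?_⟩
    set G : ℕ × ℕ → ℝ := fun q => ‖⟪S ((A ^ q.1) x), e q.2⟫‖ ^ 2 with hG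
    have hGrow : ∀ n : ℕ, HasSum (fun i : ℕ => G (n, i)) (‖S ((A ^ n) x)‖ ^ 2) :=
      fun n => he (S ((A ^ n) x))
    have hGsum : Summable G := by
      rw [summable_prod_of_nonneg (fun q => by positivity)]
      refine ⟨fun n => (hGrow n).summable, ?_⟩
      have : (fun n : ℕ => ∑' i : ℕ, G (n, i)) = fun n => ‖S ((A ^ n) x)‖ ^ 2 :=
        funext fun n => (hGrow n).tsum_eq
      rw [this]
      exact (htel x).summable
    have hFval : ∀ p : ℕ × ℕ, ‖⟪x, (T ^ p.2) (S (e p.1))⟫‖ ^ 2 = G (p.2, p.1) := by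
      intro p
      rw [hG]
      simp only []
      rw [aux_inner_pow T p.2 x (S (e p.1)), aux_selfadj_inner S hSsa]
    calc (∑' p : ℕ × ℕ, ‖⟪x, (T ^ p.2) (S (e p.1))⟫‖ ^ 2)
        = ∑' p : ℕ × ℕ, G (p.2, p.1) := tsum_congr hFval
      _ = ∑' q : ℕ × ℕ, G q := by
          rw [← (Equiv.prodComm ℕ ℕ).tsum_eq G]
          rfl
      _ = ∑' (n : ℕ) (i : ℕ), G (n, i) := Summable.tsum_prod' hGsum fun n => (hGrow n).summable
      _ = ∑' n : ℕ, ‖S ((A ^ n) x)‖ ^ 2 := tsum_congr fun n => (hGrow n).tsum_eq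
      _ = ‖x‖ ^ 2 := (htel x).tsum_eq
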